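/- Upper bound on expected acceptance length (Lemma 5.1): For every conditionally i.i.d. coupling π of p^⊗K and q, the expected acceptance length satisfies E_{(X_1,…,X_K,Y)∼π}[τ(X_1,…,X_K,Y)] ≤ Bound(K) = Σ_{i=1}^{L} Σ_{x^i ∈ Ω^i} q(x^i)·[1 − (1 − min{p(x^i)/q(x^i), 1})^K]. -/

import Mathlib

attribute [local instance] Classical.propDecidable

noncomputable section

/-- `s ∈ Ω^L` has the length-`i` prefix `x ∈ Ω^i`. -/
def HasPref {Ω : Type*} {L i : ℕ} (s : Fin L → Ω) (x : Fin i → Ω) : Prop :=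
  ∀ j : Fin L, ∀ hj : (j : ℕ) < i, s j = x ⟨(j : ℕ), hj⟩

/-- Mass of the length-`i` prefix `x` under the block distribution `p` on `Ω^L`. -/
def prefProb {Ω : Type*} [Fintype Ω] {L i : ℕ} (p : (Fin L → Ω) → ℝ) (x : Fin i → Ω) : ℝ :=
  ∑ s : Fin L → Ω, if HasPref s x then p s else 0

/-- `Bound(K) = Σ_{i=1}^{L} Σ_{x^i ∈ Ω^i} q(x^i)·[1 − (1 − min{p(x^i)/q(x^i), 1})^K]`
(the summand with `q(x^i) = 0` is automatically `0`). -/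
def Bound {Ω : Type*} [Fintype Ω] {L : ℕ} (p q : (Fin L → Ω) → ℝ) (K : ℕ) : ℝ :=
  ∑ i ∈ Finset.range L, ∑ x : Fin (i + 1) → Ω,
    prefProb q x * (1 - (1 - min (prefProb p x / prefProb q x) 1) ^ K)

/-- `π` is a coupling of `p^{⊗K}` and `q`: a pmf on `(Ω^L)^K × Ω^L` whose
`(X_1, …, X_K)`-marginal is the `K`-fold product of `p` and whose `Y`-marginal is `q`. -/
def IsCoupling {Ω : Type*} [Fintype Ω] {L K : ℕ} (p q : (Fin L → Ω) → ℝ)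
    (π : (Fin K → Fin L → Ω) × (Fin L → Ω) → ℝ) : Prop :=
  (∀ z, 0 ≤ π z) ∧
  (∀ X : Fin K → Fin L → Ω, ∑ y : Fin L → Ω, π (X, y) = ∏ k : Fin K, p (X k)) ∧
  (∀ y : Fin L → Ω, ∑ X : Fin K → Fin L → Ω, π (X, y) = q y)

/-- `π` is a conditionally i.i.d. coupling of `p^{⊗K}` and `q`: there is a kernel `κ`
from `Ω^L` to pmfs on `Ω^L` with `π(x_1, …, x_K, y) = q(y)·Π_k κ(y)(x_k)`. -/
def IsCondIIDCoupling {Ω : Type*} [Fintype Ω] {L K : ℕ} (p q : (Fin L → Ω) → ℝ)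
    (π : (Fin K → Fin L → Ω) × (Fin L → Ω) → ℝ) : Prop :=
  IsCoupling p q π ∧
  ∃ κ : (Fin L → Ω) → (Fin L → Ω) → ℝ,
    (∀ y x, 0 ≤ κ y x) ∧ (∀ y, ∑ x : Fin L → Ω, κ y x = 1) ∧
    (∀ X : Fin K → Fin L → Ω, ∀ y : Fin L → Ω, π (X, y) = q y * ∏ k : Fin K, κ y (X k))

/-- Acceptance length `τ(x_1, …, x_K, y)`: the largest `i ∈ {0, …, L}` such that
some draft `x_k` agrees with `y` on the first `i` coordinates. -/
def accLen {Ω : Type*} {L K : ℕ} (X : Fin K → Fin L → Ω) (y : Fin L → Ω) : ℕ :=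
  ((Finset.range (L + 1)).filter
    (fun i => ∃ k : Fin K, ∀ j : Fin L, (j : ℕ) < i → X k j = y j)).sup id

/-! ### Auxiliary lemmas -/

/-- Tangent-line bound for `x ↦ x^K`. -/
lemma tangent_pow (K : ℕ) (hK : 1 ≤ K) {u v : ℝ} (hu : 0 ≤ u) (hv : 0 ≤ v) :
    v ^ K - u ^ K ≤ (K : ℝ) * v ^ (K - 1) * (v - u) := by
  rcases eq_or_lt_of_le hv with h | h
  · subst h
    rcases eq_or_lt_of_le hK with h1 | h1
    · simp [← h1]
    · rw [zero_pow (by omega), zero_pow (by omega : K - 1 ≠ 0)]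
      nlinarith [pow_nonneg hu K]
  · have hB := one_add_mul_le_pow (by nlinarith [div_nonneg hu h.le] : (-2:ℝ) ≤ u / v - 1) K
    have h1 : (1 + (u / v - 1)) ^ K = (u / v) ^ K := by ring_nf
    rw [h1] at hB
    have h2 : (u / v) ^ K * v ^ K = u ^ K := by
      rw [div_pow]; field_simp
    have h3 : v ^ (K - 1) * v = v ^ K := pow_sub_one_mul (by omega) v
    have h4 : (1 + (K:ℝ) * (u / v - 1)) * v ^ K ≤ (u / v) ^ K * v ^ K :=
      mul_le_mul_of_nonneg_right hB (pow_nonneg h.le K)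
    have h5 : (u / v) * v ^ K = u * v ^ (K - 1) := by
      rw [← h3]; field_simp
    nlinarith [h4, h5, h2]

/-- Jensen-type inequality via the tangent line. -/
lemma perPrefix (K : ℕ) (hK : 1 ≤ K) {A : Type*} [Fintype A] (w : A → ℝ) (hw : ∀ a, 0 ≤ w a)
    (P : A → Prop) [DecidablePred P] (T : A → ℝ) (hT0 : ∀ a, 0 ≤ T a) (hT1 : ∀ a, T a ≤ 1)
    (phat : ℝ) (hp : 0 ≤ phat)
    (hS : (∑ a, if P a then w a * T a else 0) ≤ phat) :
    (∑ a, if P a then w a * (1 - (1 - T a) ^ K) else 0)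
      ≤ (∑ a, if P a then w a else 0)
          * (1 - (1 - min (phat / (∑ a, if P a then w a else 0)) 1) ^ K) := by
  set qhat := ∑ a, if P a then w a else 0 with hqhat
  have hq0 : 0 ≤ qhat := Finset.sum_nonneg fun a _ => by
    by_cases h : P a <;> simp [h, hw a]
  rcases eq_or_lt_of_le hq0 with hq | hq
  · have hz : ∀ a ∈ Finset.univ, (if P a then w a else 0) = 0 := by
      intro a _
      exact (Finset.sum_eq_zero_iff_of_nonneg (fun a _ => by
        by_cases h : P a <;> simp [h, hw a])).1 hq.symm a (Finset.mem_univ a)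
    have : (∑ a, if P a then w a * (1 - (1 - T a) ^ K) else 0) = 0 := by
      apply Finset.sum_eq_zero
      intro a _
      by_cases h : P a
      · have hwa := hz a (Finset.mem_univ a)
        rw [if_pos h] at hwa
        simp [h, hwa]
      · simp [h]
    rw [this, ← hq]
    simp
  · set c := min (phat / qhat) 1 with hc
    have hc0 : 0 ≤ c := le_min (div_nonneg hp hq0) zero_le_one
    have hc1 : c ≤ 1 := min_le_right _ _
    set B := (K : ℝ) * (1 - c) ^ (K - 1) with hB
    have hB0 : 0 ≤ B := mul_nonneg (Nat.cast_nonneg K) (pow_nonneg (by linarith) _)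
    set A := 1 - (1 - c) ^ K with hA
    have hS1 : (∑ a, if P a then w a * T a else 0) ≤ qhat := by
      apply Finset.sum_le_sum
      intro a _
      by_cases h : P a
      · simp only [if_pos h]
        nlinarith [hw a, hT1 a, hT0 a]
      · simp [h]
    have hcq : c * qhat = min phat qhat := by
      rw [hc, min_mul_of_nonneg _ _ hq0, div_mul_cancel₀ _ (ne_of_gt hq), one_mul]
    have hScq : (∑ a, if P a then w a * T a else 0) ≤ c * qhat := by
      rw [hcq]; exact le_min hS hS1
    have hpt : ∀ a, (if P a then w a * (1 - (1 - T a) ^ K) else 0)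
        ≤ (if P a then w a * (A + B * (T a - c)) else 0) := by
      intro a
      by_cases h : P a
      · simp only [if_pos h]
        have ht := tangent_pow K hK (u := 1 - T a) (v := 1 - c)
          (by linarith [hT1 a]) (by linarith)
        have : (1 - (1 - T a) ^ K) ≤ A + B * (T a - c) := by
          rw [hA, hB]; nlinarith [ht]
        nlinarith [hw a, this]
      · simp [h]
    calc (∑ a, if P a then w a * (1 - (1 - T a) ^ K) else 0)
        ≤ ∑ a, (if P a then w a * (A + B * (T a - c)) else 0) :=
          Finset.sum_le_sum fun a _ => hpt a
      _ = A * qhat + B * ((∑ a, if P a then w a * T a else 0) - c * qhat) := by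
          rw [hqhat, Finset.mul_sum, Finset.mul_sum, ← Finset.sum_sub_distrib,
            Finset.mul_sum, ← Finset.sum_add_distrib]
          apply Finset.sum_congr rfl
          intro a _
          by_cases h : P a <;> simp [h] <;> ring
      _ ≤ A * qhat := by
          nlinarith [mul_nonpos_of_nonneg_of_nonpos hB0
            (by linarith [hScq] : (∑ a, if P a then w a * T a else 0) - c * qhat ≤ 0)]
      _ = qhat * A := mul_comm _ _

lemma accLen_le {Ω : Type*} {L K : ℕ} (X : Fin K → Fin L → Ω) (y : Fin L → Ω) :
    accLen X y ≤ L := by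
  apply Finset.sup_le
  intro i hi
  simp only [Finset.mem_filter, Finset.mem_range] at hi
  simpa [id] using Nat.lt_succ_iff.mp hi.1

lemma le_accLen_iff {Ω : Type*} {L K : ℕ} (hK : 1 ≤ K) (X : Fin K → Fin L → Ω)
    (y : Fin L → Ω) {i : ℕ} (hi : i ≤ L) :
    i ≤ accLen X y ↔ ∃ k : Fin K, ∀ j : Fin L, (j : ℕ) < i → X k j = y j := by
  constructor
  · intro h
    have hne : ((Finset.range (L + 1)).filter
        (fun i => ∃ k : Fin K, ∀ j : Fin L, (j : ℕ) < i → X k j = y j)).Nonempty := by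
      refine ⟨0, ?_⟩
      simp only [Finset.mem_filter, Finset.mem_range]
      exact ⟨by omega, ⟨⟨0, hK⟩, fun j hj => absurd hj (Nat.not_lt_zero _)⟩⟩
    obtain ⟨m, hm, hms⟩ := Finset.exists_mem_eq_sup _ hne id
    simp only [Finset.mem_filter, Finset.mem_range] at hm
    obtain ⟨k, hk⟩ := hm.2
    rw [accLen, hms] at h
    exact ⟨k, fun j hj => hk j (lt_of_lt_of_le hj h)⟩
  · intro h
    apply Finset.le_sup (f := id) (b := i)
    simp only [Finset.mem_filter, Finset.mem_range]
    exact ⟨by omega, h⟩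

lemma cast_count {n m : ℕ} (h : n ≤ m) :
    (n : ℝ) = ∑ i ∈ Finset.range m, (if i + 1 ≤ n then (1 : ℝ) else 0) := by
  rw [Finset.sum_boole]
  congr 1
  rw [show (Finset.range m).filter (fun i => i + 1 ≤ n) = Finset.range n by
    ext a; simp only [Finset.mem_filter, Finset.mem_range]; omega]
  simp

/-- Restriction of `y ∈ Ω^L` to its length-`(i+1)` prefix. -/
def res {Ω : Type*} {L : ℕ} (i : ℕ) (hi : i + 1 ≤ L) (y : Fin L → Ω) : Fin (i + 1) → Ω :=
  fun m => y ⟨m, lt_of_lt_of_le m.isLt hi⟩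

lemma hasPref_iff_res {Ω : Type*} {L i : ℕ} (hi : i + 1 ≤ L) (y : Fin L → Ω)
    (x : Fin (i + 1) → Ω) : HasPref y x ↔ x = res i hi y := by
  constructor
  · intro h
    funext m
    exact (h ⟨m, lt_of_lt_of_le m.isLt hi⟩ m.isLt).symm
  · intro h j hj
    subst h
    rfl

section Main
variable {Ω : Type*} [Fintype Ω] {L K : ℕ}

/-- Extracting one coordinate from a product-form sum. -/
lemma sum_ite_prod (hK : 1 ≤ K) (s : Fin L → Ω) (g : (Fin L → Ω) → ℝ)
    (hg : (∑ x, g x) = 1) :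
    ∑ X : Fin K → Fin L → Ω,
      (if X ⟨0, hK⟩ = s then (1 : ℝ) else 0) * ∏ k, g (X k) = g s := by
  set k₀ : Fin K := ⟨0, hK⟩
  have h1 : ∀ X : Fin K → Fin L → Ω, (if X k₀ = s then (1 : ℝ) else 0) * ∏ k, g (X k)
      = ∏ k, (fun k x => if k = k₀ then (if x = s then g x else 0) else g x) k (X k) := by
    intro X
    by_cases h : X k₀ = s
    · rw [if_pos h, one_mul]
      apply Finset.prod_congr rfl
      intro k _
      by_cases hk : k = k₀
      · subst hk; simp [h]
      · simp [hk]
    · rw [if_neg h, zero_mul]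
      symm
      apply Finset.prod_eq_zero (Finset.mem_univ k₀)
      simp [h]
  rw [Finset.sum_congr rfl fun X _ => h1 X,
    ← Fintype.prod_sum (fun k x => if k = k₀ then (if x = s then g x else 0) else g x)]
  have h2 : ∀ k : Fin K, (∑ x, if k = k₀ then (if x = s then g x else 0) else g x)
      = if k = k₀ then g s else 1 := by
    intro k
    by_cases hk : k = k₀ <;> simp [hk, hg, Finset.sum_ite_eq']
  rw [Finset.prod_congr rfl fun k _ => h2 k, Finset.prod_ite_eq' Finset.univ k₀ fun _ => g s]
  simp

/-- The one-draft marginal identity `Σ_y q(y) κ(y)(s) = p(s)`. -/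
lemma kernel_marginal (hK : 1 ≤ K) (p q : (Fin L → Ω) → ℝ)
    (hp1 : ∑ s : Fin L → Ω, p s = 1)
    (π : (Fin K → Fin L → Ω) × (Fin L → Ω) → ℝ)
    (hmargX : ∀ X : Fin K → Fin L → Ω, ∑ y : Fin L → Ω, π (X, y) = ∏ k : Fin K, p (X k))
    (κ : (Fin L → Ω) → (Fin L → Ω) → ℝ) (hκ1 : ∀ y, ∑ x : Fin L → Ω, κ y x = 1)
    (hrep : ∀ X : Fin K → Fin L → Ω, ∀ y : Fin L → Ω, π (X, y) = q y * ∏ k : Fin K, κ y (X k))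
    (s : Fin L → Ω) :
    ∑ y : Fin L → Ω, q y * κ y s = p s := by
  set k₀ : Fin K := ⟨0, hK⟩
  calc ∑ y : Fin L → Ω, q y * κ y s
      = ∑ y : Fin L → Ω, q y * ∑ X : Fin K → Fin L → Ω,
          (if X k₀ = s then (1 : ℝ) else 0) * ∏ k, κ y (X k) := by
        refine Finset.sum_congr rfl fun y _ => ?_
        rw [sum_ite_prod hK s (κ y) (hκ1 y)]
    _ = ∑ y : Fin L → Ω, ∑ X : Fin K → Fin L → Ω,
          (if X k₀ = s then (1 : ℝ) else 0) * π (X, y) := by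
        refine Finset.sum_congr rfl fun y _ => ?_
        rw [Finset.mul_sum]
        refine Finset.sum_congr rfl fun X _ => ?_
        rw [hrep X y]; ring
    _ = ∑ X : Fin K → Fin L → Ω, (if X k₀ = s then (1 : ℝ) else 0) * ∑ y, π (X, y) := by
        rw [Finset.sum_comm]
        exact Finset.sum_congr rfl fun X _ => (Finset.mul_sum _ _ _).symm
    _ = ∑ X : Fin K → Fin L → Ω, (if X k₀ = s then (1 : ℝ) else 0) * ∏ k, p (X k) := by
        refine Finset.sum_congr rfl fun X _ => ?_
        rw [hmargX X]
    _ = p s := sum_ite_prod hK s p hp1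

/-- The conditional acceptance probability at level `i + 1`, given `Y = y`. -/
lemma cond_accept_sum {i : ℕ} (hi : i + 1 ≤ L) (q : (Fin L → Ω) → ℝ)
    (κ : (Fin L → Ω) → (Fin L → Ω) → ℝ) (hκ1 : ∀ y, ∑ x : Fin L → Ω, κ y x = 1)
    (π : (Fin K → Fin L → Ω) × (Fin L → Ω) → ℝ)
    (hrep : ∀ X : Fin K → Fin L → Ω, ∀ y : Fin L → Ω, π (X, y) = q y * ∏ k : Fin K, κ y (X k))
    (y : Fin L → Ω) :
    (∑ X : Fin K → Fin L → Ω, π (X, y) *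
        (if ∃ k : Fin K, ∀ j : Fin L, (j : ℕ) < i + 1 → X k j = y j then (1 : ℝ) else 0))
      = q y * (1 - (1 - ∑ s : Fin L → Ω,
          if HasPref s (res i hi y) then κ y s else 0) ^ K) := by
  set xr := res i hi y with hxr
  have hind : ∀ X : Fin K → Fin L → Ω,
      (if ∃ k : Fin K, ∀ j : Fin L, (j : ℕ) < i + 1 → X k j = y j then (1 : ℝ) else 0)
        = 1 - ∏ k, (if HasPref (X k) xr then (0 : ℝ) else 1) := by
    intro X
    by_cases h : ∃ k : Fin K, ∀ j : Fin L, (j : ℕ) < i + 1 → X k j = y j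
    · rw [if_pos h]
      obtain ⟨k, hk⟩ := h
      have hk' : HasPref (X k) xr := hk
      have hz : (∏ k : Fin K, if HasPref (X k) xr then (0 : ℝ) else 1) = 0 :=
        Finset.prod_eq_zero (Finset.mem_univ k) (by rw [if_pos hk'])
      rw [hz]
      ring
    · have h' : ∀ k : Fin K, ¬ HasPref (X k) xr := fun k hc => h ⟨k, fun j hj => hc j hj⟩
      rw [if_neg h, Finset.prod_eq_one fun k _ => if_neg (h' k)]
      ring
  calc (∑ X : Fin K → Fin L → Ω, π (X, y) *
        (if ∃ k : Fin K, ∀ j : Fin L, (j : ℕ) < i + 1 → X k j = y j then (1 : ℝ) else 0))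
      = ∑ X : Fin K → Fin L → Ω, q y * (∏ k, κ y (X k)
          - ∏ k, (κ y (X k) * if HasPref (X k) xr then (0 : ℝ) else 1)) := by
        refine Finset.sum_congr rfl fun X _ => ?_
        rw [hrep X y, hind X, Finset.prod_mul_distrib]
        ring
    _ = q y * ((∑ X : Fin K → Fin L → Ω, ∏ k, κ y (X k))
          - ∑ X : Fin K → Fin L → Ω, ∏ k,
              (κ y (X k) * if HasPref (X k) xr then (0 : ℝ) else 1)) := by
        rw [← Finset.mul_sum, ← Finset.sum_sub_distrib]
    _ = q y * (1 - (∑ x : Fin L → Ω, κ y x * if HasPref x xr then (0 : ℝ) else 1) ^ K) := by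
        rw [← Fintype.sum_pow (fun x => κ y x * if HasPref x xr then (0 : ℝ) else 1) K,
          ← Fintype.sum_pow (fun x => κ y x) K, hκ1 y, one_pow]
    _ = q y * (1 - (1 - ∑ s : Fin L → Ω, if HasPref s xr then κ y s else 0) ^ K) := by
        congr 2
        have : ∀ x : Fin L → Ω, κ y x * (if HasPref x xr then (0 : ℝ) else 1)
            = κ y x - (if HasPref x xr then κ y x else 0) := by
          intro x; by_cases h : HasPref x xr <;> simp [h]
        rw [Finset.sum_congr rfl fun x _ => this x, Finset.sum_sub_distrib, hκ1 y]

end Main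

/-- Lemma 5.1: upper bound on the expected acceptance length for every
conditionally i.i.d. coupling of `p^{⊗K}` and `q`. -/
theorem expected_acceptance_length_le_bound
    {Ω : Type*} [Fintype Ω] [Nonempty Ω] {L K : ℕ} (hL : 1 ≤ L) (hK : 1 ≤ K)
    (p q : (Fin L → Ω) → ℝ)
    (hp0 : ∀ s, 0 ≤ p s) (hp1 : ∑ s : Fin L → Ω, p s = 1)
    (hq0 : ∀ s, 0 ≤ q s) (hq1 : ∑ s : Fin L → Ω, q s = 1)
    (π : (Fin K → Fin L → Ω) × (Fin L → Ω) → ℝ)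
    (hπ : IsCondIIDCoupling p q π) :
    (∑ z : (Fin K → Fin L → Ω) × (Fin L → Ω), π z * (accLen z.1 z.2 : ℝ))
      ≤ Bound p q K := by
  obtain ⟨⟨hπ0, hmargX, hmargY⟩, κ, hκ0, hκ1, hrep⟩ := hπ
  have hκp : ∀ s, ∑ y : Fin L → Ω, q y * κ y s = p s :=
    kernel_marginal hK p q hp1 π hmargX κ hκ1 hrep
  -- Step A: rewrite the expectation as a sum over levels
  have stepA : (∑ z : (Fin K → Fin L → Ω) × (Fin L → Ω), π z * (accLen z.1 z.2 : ℝ))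
      = ∑ i ∈ Finset.range L, ∑ y : Fin L → Ω, ∑ X : Fin K → Fin L → Ω,
          π (X, y) * (if ∃ k : Fin K, ∀ j : Fin L, (j : ℕ) < i + 1 → X k j = y j
            then (1 : ℝ) else 0) := by
    rw [Fintype.sum_prod_type]
    calc (∑ X : Fin K → Fin L → Ω, ∑ y : Fin L → Ω, π (X, y) * (accLen X y : ℝ))
        = ∑ X : Fin K → Fin L → Ω, ∑ y : Fin L → Ω, ∑ i ∈ Finset.range L,
            π (X, y) * (if ∃ k : Fin K, ∀ j : Fin L, (j : ℕ) < i + 1 → X k j = y j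
              then (1 : ℝ) else 0) := by
          refine Finset.sum_congr rfl fun X _ => Finset.sum_congr rfl fun y _ => ?_
          rw [cast_count (accLen_le X y), Finset.mul_sum]
          refine Finset.sum_congr rfl fun i hi => ?_
          congr 1
          exact if_congr (le_accLen_iff hK X y (by
            simp only [Finset.mem_range] at hi; omega)) rfl rfl
      _ = ∑ y : Fin L → Ω, ∑ X : Fin K → Fin L → Ω, ∑ i ∈ Finset.range L,
            π (X, y) * (if ∃ k : Fin K, ∀ j : Fin L, (j : ℕ) < i + 1 → X k j = y j
              then (1 : ℝ) else 0) := Finset.sum_comm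
      _ = ∑ y : Fin L → Ω, ∑ i ∈ Finset.range L, ∑ X : Fin K → Fin L → Ω,
            π (X, y) * (if ∃ k : Fin K, ∀ j : Fin L, (j : ℕ) < i + 1 → X k j = y j
              then (1 : ℝ) else 0) := Finset.sum_congr rfl fun y _ => Finset.sum_comm
      _ = ∑ i ∈ Finset.range L, ∑ y : Fin L → Ω, ∑ X : Fin K → Fin L → Ω,
            π (X, y) * (if ∃ k : Fin K, ∀ j : Fin L, (j : ℕ) < i + 1 → X k j = y j
              then (1 : ℝ) else 0) := Finset.sum_comm
  rw [stepA, Bound]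
  apply Finset.sum_le_sum
  intro i hmem
  have hi : i + 1 ≤ L := by simp only [Finset.mem_range] at hmem; omega
  -- Step B: conditional acceptance probability
  rw [Finset.sum_congr rfl fun y _ => cond_accept_sum hi q κ hκ1 π hrep y]
  -- Step C: group by prefix
  have hgroup : (∑ y : Fin L → Ω, q y * (1 - (1 - ∑ s : Fin L → Ω,
        if HasPref s (res i hi y) then κ y s else 0) ^ K))
      = ∑ x : Fin (i + 1) → Ω, ∑ y : Fin L → Ω,
          (if x = res i hi y then q y * (1 - (1 - ∑ s : Fin L → Ω,
            if HasPref s (res i hi y) then κ y s else 0) ^ K) else 0) := by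
    rw [Finset.sum_comm]
    refine Finset.sum_congr rfl fun y _ => ?_
    rw [Finset.sum_ite_eq' Finset.univ (res i hi y)]
    simp
  rw [hgroup]
  apply Finset.sum_le_sum
  intro x _
  -- replace the prefix of `y` by `x` inside the indicator
  have hTt : ∀ y : Fin L → Ω,
      (if x = res i hi y then q y * (1 - (1 - ∑ s : Fin L → Ω,
        if HasPref s (res i hi y) then κ y s else 0) ^ K) else 0)
      = (if x = res i hi y then q y * (1 - (1 - ∑ s : Fin L → Ω,
        if HasPref s x then κ y s else 0) ^ K) else 0) := by
    intro y
    by_cases h : x = res i hi y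
    · rw [if_pos h, if_pos h, h]
    · rw [if_neg h, if_neg h]
  rw [Finset.sum_congr rfl fun y _ => hTt y]
  -- identify prefProb with the grouped weights
  have hqpref : prefProb q x = ∑ y : Fin L → Ω, (if x = res i hi y then q y else 0) :=
    Finset.sum_congr rfl fun y _ => if_congr (hasPref_iff_res hi y x) rfl rfl
  have hT0 : ∀ y : Fin L → Ω,
      0 ≤ ∑ s : Fin L → Ω, (if HasPref s x then κ y s else 0) := fun y =>
    Finset.sum_nonneg fun s _ => by by_cases h : HasPref s x <;> simp [h, hκ0 y s]
  have hT1 : ∀ y : Fin L → Ω,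
      (∑ s : Fin L → Ω, (if HasPref s x then κ y s else 0)) ≤ 1 := by
    intro y
    rw [← hκ1 y]
    apply Finset.sum_le_sum
    intro s _
    by_cases h : HasPref s x <;> simp [h, hκ0 y s]
  have hppref : 0 ≤ prefProb p x :=
    Finset.sum_nonneg fun s _ => by by_cases h : HasPref s x <;> simp [h, hp0 s]
  have hS : (∑ y : Fin L → Ω, if x = res i hi y then
      q y * ∑ s : Fin L → Ω, (if HasPref s x then κ y s else 0) else 0) ≤ prefProb p x := by
    calc (∑ y : Fin L → Ω, if x = res i hi y then
          q y * ∑ s : Fin L → Ω, (if HasPref s x then κ y s else 0) else 0)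
        ≤ ∑ y : Fin L → Ω, q y * ∑ s : Fin L → Ω, (if HasPref s x then κ y s else 0) := by
          apply Finset.sum_le_sum
          intro y _
          by_cases h : x = res i hi y
          · rw [if_pos h]
          · rw [if_neg h]
            exact mul_nonneg (hq0 y) (hT0 y)
      _ = ∑ y : Fin L → Ω, ∑ s : Fin L → Ω, (if HasPref s x then q y * κ y s else 0) := by
          refine Finset.sum_congr rfl fun y _ => ?_
          rw [Finset.mul_sum]
          exact Finset.sum_congr rfl fun s _ => by
            by_cases h : HasPref s x <;> simp [h]
      _ = ∑ s : Fin L → Ω, ∑ y : Fin L → Ω, (if HasPref s x then q y * κ y s else 0) :=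
          Finset.sum_comm
      _ = ∑ s : Fin L → Ω, (if HasPref s x then p s else 0) := by
          refine Finset.sum_congr rfl fun s _ => ?_
          by_cases h : HasPref s x
          · simp only [if_pos h]
            exact hκp s
          · simp [h]
      _ = prefProb p x := rfl
  rw [hqpref]
  exact perPrefix K hK q hq0 (fun y => x = res i hi y)
    (fun y => ∑ s : Fin L → Ω, (if HasPref s x then κ y s else 0))
    hT0 hT1 (prefProb p x) hppref hS
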